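/- For each root w of φ and any vector f ∈ ℝⁿ with associated polynomial f(x) = Σ_{j=0}^{n-1} f_j x^j, the transpose of the n×m generalized ideal matrix H*(f)_{n×m} = [f, Hf, H²f, …, H^{m-1}f] maps the vector (1, w, …, w^{n-1})ᵀ to f(w)·(1, w, …, w^{m-1})ᵀ. -/
import Mathlib


open Polynomial Matrix

/-- The rotation matrix `H_φ` of a monic polynomial
`φ(x) = xⁿ − φ_{n-1}x^{n-1} − ⋯ − φ₁x − φ₀` (note `φᵢ = -(coeff φ i)` for `i < n`). -/
def rotMat (n : ℕ) (φ : Polynomial ℂ) : Matrix (Fin n) (Fin n) ℂ :=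
  Matrix.of fun i j =>
    if (j : ℕ) + 1 < n then (if (i : ℕ) = (j : ℕ) + 1 then 1 else 0)
    else -φ.coeff (i : ℕ)

/-- The `n × m` generalized ideal matrix `H*(f) = [f, Hf, H²f, …, H^{m-1}f]`. -/
noncomputable def genIdealMat (n m : ℕ) (H : Matrix (Fin n) (Fin n) ℂ) (f : Fin n → ℂ) :
    Matrix (Fin n) (Fin m) ℂ :=
  Matrix.of fun i j => (H ^ (j : ℕ)).mulVec f i

lemma sum_coeff_eq (n : ℕ) (φ : Polynomial ℂ) (hmonic : φ.Monic) (hdeg : φ.natDegree = n)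
    (w : ℂ) (hw : φ.IsRoot w) :
    ∑ j : Fin n, φ.coeff (j : ℕ) * w ^ (j : ℕ) = -w ^ n := by
  have h := Polynomial.eval_eq_sum_range (p := φ) (x := w)
  rw [hw.eq_zero, hdeg] at h
  rw [Finset.sum_range_succ] at h
  have hcn : φ.coeff n = 1 := by
    have := hmonic.leadingCoeff
    rwa [Polynomial.leadingCoeff, hdeg] at this
  rw [hcn, one_mul] at h
  have hs := Fin.sum_univ_eq_sum_range (fun j => φ.coeff j * w ^ j) n
  rw [hs]
  linear_combination -h

lemma rotMat_transpose_mulVec (n : ℕ) (φ : Polynomial ℂ) (hmonic : φ.Monic)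
    (hdeg : φ.natDegree = n) (w : ℂ) (hw : φ.IsRoot w) :
    (rotMat n φ)ᵀ.mulVec (fun i : Fin n => w ^ (i : ℕ)) =
      w • (fun i : Fin n => w ^ (i : ℕ)) := by
  funext i
  simp only [mulVec, dotProduct, transpose_apply, rotMat, Matrix.of_apply, Pi.smul_apply,
    smul_eq_mul]
  by_cases hlt : (i : ℕ) + 1 < n
  · simp only [if_pos hlt]
    have : ∀ j : Fin n, ((if (j : ℕ) = (i : ℕ) + 1 then (1:ℂ) else 0) * w ^ (j : ℕ)) =
        if j = (⟨(i:ℕ)+1, hlt⟩ : Fin n) then w ^ (j : ℕ) else 0 := by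
      intro j
      by_cases h : j = (⟨(i:ℕ)+1, hlt⟩ : Fin n)
      · simp [h]
      · have : ¬ ((j : ℕ) = (i : ℕ) + 1) := fun hc => h (Fin.ext hc)
        simp [h, this]
    rw [Finset.sum_congr rfl (fun j _ => this j), Finset.sum_ite_eq' Finset.univ]
    simp [pow_succ, mul_comm]
  · simp only [if_neg hlt]
    have hin : (i : ℕ) + 1 = n := Nat.le_antisymm i.isLt (Nat.not_lt.mp hlt)
    have hsum := sum_coeff_eq n φ hmonic hdeg w hw
    have hpow : w ^ n = w * w ^ (i : ℕ) := by
      rw [show w ^ n = w ^ ((i:ℕ)+1) by rw [hin], pow_succ]; ring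
    calc ∑ j : Fin n, -φ.coeff (j:ℕ) * w ^ (j:ℕ)
        = -∑ j : Fin n, φ.coeff (j:ℕ) * w ^ (j:ℕ) := by
          rw [← Finset.sum_neg_distrib]; simp
      _ = w ^ n := by rw [hsum]; ring
      _ = w * w ^ (i : ℕ) := hpow

lemma rotMat_pow_transpose_mulVec (n : ℕ) (φ : Polynomial ℂ) (hmonic : φ.Monic)
    (hdeg : φ.natDegree = n) (w : ℂ) (hw : φ.IsRoot w) (k : ℕ) :
    ((rotMat n φ) ^ k)ᵀ.mulVec (fun i : Fin n => w ^ (i : ℕ)) =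
      (w ^ k) • (fun i : Fin n => w ^ (i : ℕ)) := by
  induction k with
  | zero => simp
  | succ k ih =>
    rw [pow_succ, Matrix.transpose_mul, ← Matrix.mulVec_mulVec, ih, Matrix.mulVec_smul,
      rotMat_transpose_mulVec n φ hmonic hdeg w hw, smul_smul, pow_succ]

/-- For each root `w` of `φ` and any `f ∈ ℝⁿ` with polynomial `f(x) = Σ fⱼ xʲ`,
the transpose of `H*(f)_{n×m}` maps `(1, w, …, w^{n-1})ᵀ` to `f(w)·(1, w, …, w^{m-1})ᵀ`. -/
theorem genIdealMat_transpose_mulVec (n m : ℕ) (hn : 0 < n) (φ : Polynomial ℂ)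
    (hmonic : φ.Monic) (hdeg : φ.natDegree = n) (h0 : φ.coeff 0 ≠ 0)
    (w : ℂ) (hw : φ.IsRoot w) (f : Fin n → ℝ) :
    (genIdealMat n m (rotMat n φ) (fun i => (f i : ℂ)))ᵀ.mulVec
        (fun i : Fin n => w ^ (i : ℕ)) =
      (∑ j : Fin n, (f j : ℂ) * w ^ (j : ℕ)) • (fun i : Fin m => w ^ (i : ℕ)) := by
  funext j
  have key := rotMat_pow_transpose_mulVec n φ hmonic hdeg w hw (j : ℕ)
  have lhs : ((genIdealMat n m (rotMat n φ) (fun i => (f i : ℂ)))ᵀ.mulVec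
        (fun i : Fin n => w ^ (i : ℕ))) j
      = (fun i : Fin n => w ^ (i:ℕ)) ⬝ᵥ
          ((rotMat n φ) ^ (j:ℕ)).mulVec (fun i => (f i : ℂ)) := by
    simp [genIdealMat, mulVec, dotProduct, mul_comm]
  rw [lhs, Matrix.dotProduct_mulVec, ← Matrix.mulVec_transpose, key]
  simp only [Pi.smul_apply, smul_eq_mul, smul_dotProduct, dotProduct, Pi.smul_apply,
    smul_eq_mul, Finset.mul_sum]
  rw [Finset.sum_mul]
  congr 1
  ext i
  ring
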